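/- Let G be a simple graph on a finite vertex type V and let x : Sym2 V → ZMod 2 be a nonzero vector with x e = 0 whenever e is not an edge of G, such that the incidence matrix of G over ZMod 2 applied to x is the zero vector. Then there exists a cycle p in G all of whose edges e satisfy x e = 1. -/

import Mathlib

open Matrix

/-- A nonzero vector supported on the edges of `G` lying in the kernel of the incidence
matrix over `ZMod 2` contains a cycle among its support. -/
theorem ker_incMatrix_exists_cycle {V : Type*} [Fintype V] [DecidableEq V]
    (G : SimpleGraph V) (x : Sym2 V → ZMod 2) (hx0 : x ≠ 0)
    (hx : ∀ e, e ∉ G.edgeSet → x e = 0)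
    (hker : (letI := Classical.decRel G.Adj; G.incMatrix (ZMod 2)) *ᵥ x = 0) :
    ∃ (u : V) (p : G.Walk u u), p.IsCycle ∧ ∀ e ∈ p.edges, x e = 1 := by
  classical
  have hx01 : ∀ a : ZMod 2, a = 0 ∨ a = 1 := by decide
  -- the support graph
  set H : SimpleGraph V :=
    { Adj := fun a b => G.Adj a b ∧ x s(a, b) = 1
      symm := by
        constructor
        rintro a b ⟨h1, h2⟩
        refine ⟨h1.symm, ?_⟩
        rw [Sym2.eq_swap]; exact h2
      loopless := ⟨fun a h => G.irrefl h.1⟩ } with hH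
  have hHG : H ≤ G := fun a b h => h.1
  have hHedge : ∀ e : Sym2 V, e ∈ H.edgeSet ↔ x e = 1 := by
    intro e
    induction e using Sym2.ind with
    | _ a b =>
      rw [SimpleGraph.mem_edgeSet]
      constructor
      · exact fun h => h.2
      · intro h
        refine ⟨?_, h⟩
        by_contra hadj
        have h0 := hx s(a, b) (by rwa [SimpleGraph.mem_edgeSet])
        rw [h0] at h
        exact one_ne_zero h.symm
  -- each term of the kernel sum equals the incidence entry of `H`
  have hterm : ∀ (v : V) (e : Sym2 V),
      G.incMatrix (ZMod 2) v e * x e = H.incMatrix (ZMod 2) v e := by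
    intro v e
    by_cases hv : e ∈ H.incidenceSet v
    · rw [H.incMatrix_of_mem_incidenceSet hv,
        G.incMatrix_of_mem_incidenceSet ⟨SimpleGraph.edgeSet_mono hHG hv.1, hv.2⟩,
        one_mul, (hHedge e).mp hv.1]
    · rw [H.incMatrix_of_notMem_incidenceSet hv]
      rcases hx01 (x e) with h | h
      · rw [h, mul_zero]
      · have he : e ∈ H.edgeSet := (hHedge e).mpr h
        have hve : v ∉ e := fun hve => hv ⟨he, hve⟩
        rw [G.incMatrix_of_notMem_incidenceSet (fun h' => hve h'.2), zero_mul]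
  -- every vertex has even degree in `H`
  have hdeg : ∀ v : V, ((H.degree v : ZMod 2)) = 0 := by
    intro v
    have h0 := congrFun hker v
    rw [Matrix.mulVec, dotProduct] at h0
    simp only [hterm] at h0
    rw [H.sum_incMatrix_apply] at h0
    exact h0.symm ▸ rfl
  -- any vertex with a neighbor has another neighbor
  have key : ∀ u a : V, H.Adj u a → ∃ w, H.Adj u w ∧ w ≠ a := by
    intro u a hadj
    by_contra hcon
    push_neg at hcon
    have hset : H.neighborFinset u = {a} := by
      ext w
      simp only [SimpleGraph.mem_neighborFinset, Finset.mem_singleton]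
      exact ⟨fun h => hcon w h, fun h => h ▸ hadj⟩
    have hd1 : H.degree u = 1 := by
      rw [SimpleGraph.degree, hset, Finset.card_singleton]
    have := hdeg u
    rw [hd1] at this
    simp at this
  -- get an edge of `H`
  have hex : ∃ a b : V, H.Adj a b := by
    by_contra hcon
    push_neg at hcon
    apply hx0
    funext e
    induction e using Sym2.ind with
    | _ a b =>
      rcases hx01 (x s(a, b)) with h | h
      · exact h
      · exact absurd ((hHedge s(a, b)).mpr h) (fun h' => hcon a b h')
  obtain ⟨a, b, hab⟩ := hex
  -- maximal path setup
  set P : ℕ → Prop := fun n => ∃ (u v : V) (p : H.Walk u v), p.IsPath ∧ p.length = n with hPdef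
  have hP1 : P 1 := ⟨a, b, SimpleGraph.Walk.cons hab SimpleGraph.Walk.nil,
    by simp [SimpleGraph.Walk.cons_isPath_iff, hab.ne], rfl⟩
  have hN1 : 1 ≤ Fintype.card V := Fintype.card_pos_iff.mpr ⟨a⟩
  set k : ℕ := Nat.findGreatest P (Fintype.card V) with hk
  have hPk : P k := Nat.findGreatest_spec hN1 hP1
  obtain ⟨u, v, p, hp, hlen⟩ := hPk
  have hk1 : 1 ≤ k := Nat.le_findGreatest hN1 hP1
  -- p is nonempty, so it starts with an edge
  cases p with
  | nil => simp at hlen; omega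
  | @cons _ u₁ _ h q =>
    obtain ⟨w, hw, hwne⟩ := key u u₁ h
    have hqpath : q.IsPath ∧ u ∉ q.support := (SimpleGraph.Walk.cons_isPath_iff h q).mp hp
    by_cases hws : w ∈ (SimpleGraph.Walk.cons h q).support
    · -- close off a cycle through `w`
      have hp' : ((SimpleGraph.Walk.cons h q).takeUntil w hws).IsPath := hp.takeUntil hws
      have he' : s(w, u) ∉ ((SimpleGraph.Walk.cons h q).takeUntil w hws).edges := by
        intro he
        have hmem : s(w, u) ∈ (SimpleGraph.Walk.cons h q).edges :=
          SimpleGraph.Walk.edges_takeUntil_subset _ hws he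
        rw [SimpleGraph.Walk.edges_cons, List.mem_cons] at hmem
        rcases hmem with hmem | hmem
        · rw [Sym2.eq_iff] at hmem
          rcases hmem with ⟨h1, h2⟩ | ⟨h1, h2⟩
          · exact hw.ne h1.symm
          · exact hwne h1
        · exact hqpath.2 (SimpleGraph.Walk.snd_mem_support_of_mem_edges q hmem)
      have hc : (SimpleGraph.Walk.cons hw.symm
          ((SimpleGraph.Walk.cons h q).takeUntil w hws)).IsCycle :=
        SimpleGraph.Path.cons_isCycle ⟨_, hp'⟩ hw.symm he'
      set c := SimpleGraph.Walk.cons hw.symm ((SimpleGraph.Walk.cons h q).takeUntil w hws)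
        with hcdef
      have hsub : ∀ e ∈ c.edges, e ∈ G.edgeSet := fun e he =>
        SimpleGraph.edgeSet_mono hHG (c.edges_subset_edgeSet he)
      refine ⟨w, c.transfer G hsub, hc.transfer hsub, ?_⟩
      intro e he
      rw [SimpleGraph.Walk.edges_transfer] at he
      exact (hHedge e).mp (c.edges_subset_edgeSet he)
    · -- extend the maximal path: contradiction
      exfalso
      have hext : (SimpleGraph.Walk.cons hw.symm (SimpleGraph.Walk.cons h q)).IsPath :=
        (SimpleGraph.Walk.cons_isPath_iff _ _).mpr ⟨hp, hws⟩
      have hlt : k + 1 ≤ Fintype.card V := by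
        have h2 := hext.length_lt
        simp only [SimpleGraph.Walk.length_cons] at h2 hlen
        omega
      exact Nat.findGreatest_is_greatest (Nat.lt_succ_self k) hlt
        ⟨w, v, _, hext, by simp [SimpleGraph.Walk.length_cons, hlen]⟩
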